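/- arXiv:1503.01799 — 2 statements merged into one kernel-verified Lean document; each statement's English description precedes it below -/
import Mathlib

section
/- Let z ≥ 2 be real and let d be a positive integer all of whose prime factors are strictly less than z. Then for every real D with 1 ≤ D ≤ d, there exists a divisor d₁ of d with D ≤ d₁ < z·D. -/
/-- **Divisor-factorization principle for smooth numbers.** Let `z ≥ 2` be real and let
`d` be a positive integer all of whose prime factors are strictly less than `z`. Then
for every real `D` with `1 ≤ D ≤ d` there is a divisor `d₁` of `d` with `D ≤ d₁ < z·D`. -/
theorem smooth_number_divisor_in_range :
    ∀ z : ℝ, 2 ≤ z → ∀ d : ℕ, 0 < d → (∀ p : ℕ, p.Prime → p ∣ d → (p : ℝ) < z) →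
    ∀ D : ℝ, 1 ≤ D → D ≤ (d : ℝ) →
    ∃ d₁ : ℕ, d₁ ∣ d ∧ D ≤ (d₁ : ℝ) ∧ (d₁ : ℝ) < z * D := by
  intro z hz d hd hsmooth D hD hDd
  set S := d.divisors.filter (fun e : ℕ => D ≤ (e : ℝ)) with hS
  have hdS : d ∈ S := by
    simp [hS, Nat.mem_divisors, hd.ne', hDd]
  have hne : S.Nonempty := ⟨d, hdS⟩
  set d₁ := S.min' hne with hd₁
  have hmem : d₁ ∈ S := S.min'_mem hne
  have hdiv : d₁ ∣ d := (Nat.mem_divisors.mp (Finset.mem_filter.mp hmem).1).1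
  have hDle : D ≤ (d₁ : ℝ) := (Finset.mem_filter.mp hmem).2
  have hpos : 0 < d₁ := Nat.pos_of_dvd_of_pos hdiv hd
  refine ⟨d₁, hdiv, hDle, ?_⟩
  rcases eq_or_lt_of_le (show 1 ≤ d₁ from hpos) with h1 | h1
  · -- d₁ = 1
    have : (d₁ : ℝ) = 1 := by exact_mod_cast h1.symm
    rw [this]
    nlinarith
  · -- d₁ > 1, has a prime factor
    obtain ⟨p, hp, hpd₁⟩ := Nat.exists_prime_and_dvd (by omega : d₁ ≠ 1)
    have hpd : p ∣ d := hpd₁.trans hdiv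
    have hpz : (p : ℝ) < z := hsmooth p hp hpd
    obtain ⟨m, hm⟩ := hpd₁
    have hmpos : 0 < m := by
      rcases Nat.eq_zero_or_pos m with h | h
      · subst h; simp at hm; omega
      · exact h
    have hmdiv : m ∣ d := (Dvd.intro_left p hm.symm).trans hdiv
    have hmlt : m < d₁ := by
      have : 2 ≤ p := hp.two_le
      calc m < p * m := by nlinarith
        _ = d₁ := hm.symm
    have hmnot : m ∉ S := fun hmS => absurd (S.min'_le m hmS) (by omega)
    have hmD : (m : ℝ) < D := by
      by_contra hcon
      exact hmnot (Finset.mem_filter.mpr ⟨Nat.mem_divisors.mpr ⟨hmdiv, hd.ne'⟩,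
        le_of_not_gt hcon⟩)
    have : (d₁ : ℝ) = (p : ℝ) * m := by exact_mod_cast congrArg Nat.cast hm
    rw [this]
    have hp0 : (0:ℝ) ≤ p := Nat.cast_nonneg p
    have hm0 : (0:ℝ) ≤ m := Nat.cast_nonneg m
    exact mul_lt_mul'' hpz hmD hp0 hm0
end

section
/- For every ε > 0 there is a constant C > 0 with the following property. Let N ≥ 2 be real, P = (2/3)N^{1/2}, and define f₀(α) = Σ_{p prime, P/2 ≤ p < P} e(p² α). Let Z be a finite set of integers contained in (N/2, N], and define K(α) = Σ_{n ∈ Z} e(−n α). Then ∫₀¹ |f₀(α)|³ |K(α)| dα ≤ C ( N^{3/4+ε} |Z|^{1/2} + N^{1/2+ε} |Z| ). -/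
open Finset
open MeasureTheory

/-- `e(x) = exp(2πix)`. -/
noncomputable def e (x : ℝ) : ℂ := Complex.exp (2 * Real.pi * Complex.I * x)


set_option maxHeartbeats 1000000

lemma continuous_e_mul (r : ℝ) : Continuous fun α : ℝ => e (r * α) := by
  unfold e; fun_prop

lemma e_add (x y : ℝ) : e (x + y) = e x * e y := by
  unfold e; rw [← Complex.exp_add]; congr 1; push_cast; ring

lemma conj_e (x : ℝ) : (starRingEnd ℂ) (e x) = e (-x) := by
  unfold e
  rw [← Complex.exp_conj]
  congr 1
  simp only [map_mul, Complex.conj_I, Complex.conj_ofReal, map_ofNat]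
  push_cast
  ring

lemma integral_e (k : ℤ) :
    ∫ α in (0:ℝ)..1, e ((k:ℝ) * α) = if k = 0 then 1 else 0 := by
  have hrw : ∀ α : ℝ, e ((k:ℝ) * α) = Complex.exp ((2 * Real.pi * Complex.I * k) * α) := by
    intro α; unfold e; congr 1; push_cast; ring
  simp only [hrw]
  split_ifs with hk
  · subst hk; simp
  · have hc : (2 * Real.pi * Complex.I * k) ≠ 0 := by
      simp [Real.pi_ne_zero, Complex.I_ne_zero, hk]
    rw [integral_exp_mul_complex hc]
    have h1 : Complex.exp (2 * Real.pi * Complex.I * k * 1) = 1 := by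
      rw [mul_one]
      have := Complex.exp_int_mul_two_pi_mul_I k
      rw [← this]; congr 1; push_cast; ring
    push_cast
    rw [h1]
    simp

lemma norm_e (x : ℝ) : ‖e x‖ = 1 := by
  unfold e
  rw [show 2 * (Real.pi:ℂ) * Complex.I * x = ((2 * Real.pi * x : ℝ) : ℂ) * Complex.I by
    push_cast; ring]
  rw [Complex.norm_exp_ofReal_mul_I]

lemma sqrt_add_le' {a b : ℝ} (ha : 0 ≤ a) (hb : 0 ≤ b) :
    Real.sqrt (a + b) ≤ Real.sqrt a + Real.sqrt b := by
  have h1 : a + b ≤ (Real.sqrt a + Real.sqrt b) ^ 2 := by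
    have := Real.sq_sqrt ha
    have := Real.sq_sqrt hb
    have := Real.sqrt_nonneg a
    have := Real.sqrt_nonneg b
    nlinarith [mul_nonneg (Real.sqrt_nonneg a) (Real.sqrt_nonneg b)]
  calc Real.sqrt (a + b) ≤ Real.sqrt ((Real.sqrt a + Real.sqrt b) ^ 2) := Real.sqrt_le_sqrt h1
    _ = Real.sqrt a + Real.sqrt b := Real.sqrt_sq (by positivity)

lemma key_count {ι : Type*} [DecidableEq ι] (s : Finset ι) (c : ι → ℤ) :
    ∫ α in (0:ℝ)..1, ‖∑ i ∈ s, e ((c i : ℝ) * α)‖ ^ 2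
      = (((s ×ˢ s).filter fun p => c p.1 = c p.2).card : ℝ) := by
  have hexp : ∀ α : ℝ, ((‖∑ i ∈ s, e ((c i : ℝ) * α)‖ ^ 2 : ℝ) : ℂ)
      = ∑ p ∈ s ×ˢ s, e (((c p.1 - c p.2 : ℤ) : ℝ) * α) := by
    intro α
    have h1 : ((‖∑ i ∈ s, e ((c i : ℝ) * α)‖ ^ 2 : ℝ) : ℂ)
        = (∑ i ∈ s, e ((c i : ℝ) * α)) * (starRingEnd ℂ) (∑ i ∈ s, e ((c i : ℝ) * α)) := by
      rw [Complex.mul_conj']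
      norm_cast
    rw [h1, map_sum, Finset.sum_mul_sum, ← Finset.sum_product']
    refine Finset.sum_congr rfl fun p _ => ?_
    rw [conj_e, ← e_add]
    congr 1
    push_cast
    ring
  have hc : (((((s ×ˢ s).filter fun p => c p.1 = c p.2).card : ℝ)) : ℂ)
      = ∫ α in (0:ℝ)..1, ((‖∑ i ∈ s, e ((c i : ℝ) * α)‖ ^ 2 : ℝ) : ℂ) := by
    simp only [hexp]
    rw [intervalIntegral.integral_finset_sum]
    · simp only [integral_e]
      simp_rw [sub_eq_zero]
      rw [Finset.sum_boole]
      norm_cast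
    · intro p _
      exact (continuous_e_mul _).intervalIntegrable _ _
  rw [intervalIntegral.integral_ofReal] at hc
  exact_mod_cast hc.symm

lemma divisor_bound {ε : ℝ} (hε : 0 < ε) :
    ∃ C : ℝ, 1 ≤ C ∧ ∀ n : ℕ, n ≠ 0 → (n.divisors.card : ℝ) ≤ C * (n : ℝ) ^ ε := by
  classical
  set K : ℝ := 1 + 1 / (ε * Real.log 2) with hK
  have hlog2 : 0 < Real.log 2 := Real.log_pos (by norm_num)
  have hKpos : 1 ≤ K := le_add_of_nonneg_right (by positivity)
  set B : ℕ := ⌈(2:ℝ) ^ (1/ε)⌉₊ with hB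
  refine ⟨K ^ (B + 1), one_le_pow₀ hKpos, ?_⟩
  intro n hn
  rw [Nat.card_divisors hn]
  have hnprod : (n : ℝ) = ∏ p ∈ n.primeFactors, ((p : ℝ) ^ (n.factorization p)) := by
    conv_lhs => rw [← Nat.factorization_prod_pow_eq_self hn]
    rw [Nat.prod_factorization_eq_prod_primeFactors]
    push_cast
    rfl
  -- n^ε = ∏ (p^a)^ε
  have hnε : (n : ℝ) ^ ε = ∏ p ∈ n.primeFactors, ((p : ℝ) ^ (n.factorization p)) ^ ε := by
    rw [hnprod, ← Real.finset_prod_rpow _ _ (fun p _ => by positivity) ε]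
  -- termwise bounds
  have hterm : ∀ p ∈ n.primeFactors,
      ((n.factorization p + 1 : ℕ) : ℝ) ≤ (if p ≤ B then K else 1) * ((p : ℝ) ^ (n.factorization p)) ^ ε := by
    intro p hp
    have hpp := Nat.prime_of_mem_primeFactors hp
    have hp2 : (2:ℝ) ≤ p := by exact_mod_cast hpp.two_le
    set a : ℕ := n.factorization p with ha
    have hppos : (0:ℝ) < p := by linarith
    have hrw : ((p : ℝ) ^ a) ^ ε = ((p:ℝ) ^ ε) ^ a := by
      rw [← Real.rpow_natCast (p:ℝ) a, ← Real.rpow_mul hppos.le, mul_comm,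
        Real.rpow_mul hppos.le, Real.rpow_natCast]
    rw [hrw]
    split_ifs with hpB
    · -- small prime: a + 1 ≤ K * (p^ε)^a, using p^ε ≥ 2^ε = exp(ε log 2) and exp x ≥ 1 + x
      have h1 : Real.exp (ε * Real.log 2) ≤ (p:ℝ) ^ ε := by
        have h2e : (2:ℝ) ^ ε = Real.exp (Real.log 2 * ε) := Real.rpow_def_of_pos (by norm_num) ε
        rw [mul_comm, ← h2e]
        exact Real.rpow_le_rpow (by norm_num) hp2 hε.le
      have h2 : ∀ m : ℕ, (m + 1 : ℝ) ≤ K * ((p:ℝ) ^ ε) ^ m := by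
        intro m
        have hexp : (1 + m * (ε * Real.log 2)) ≤ ((p:ℝ) ^ ε) ^ m := by
          calc (1 + m * (ε * Real.log 2)) ≤ Real.exp (m * (ε * Real.log 2)) := by
                have := Real.add_one_le_exp (m * (ε * Real.log 2)); linarith
            _ = (Real.exp (ε * Real.log 2)) ^ m := by rw [← Real.exp_nat_mul]
            _ ≤ ((p:ℝ) ^ ε) ^ m := by
                apply pow_le_pow_left₀ (Real.exp_pos _).le h1
        have hK1 : K * (1 + m * (ε * Real.log 2)) ≥ m + 1 := by
          have hpos : 0 < ε * Real.log 2 := by positivity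
          have : K * (1 + m * (ε * Real.log 2))
              = 1 + m * (ε * Real.log 2) + m * ((ε * Real.log 2) * (1/(ε * Real.log 2))) + 1/(ε*Real.log 2) := by
            rw [hK]; ring
          rw [this, mul_one_div, div_self hpos.ne']
          have : (0:ℝ) ≤ m * (ε * Real.log 2) := by positivity
          have h0 : (0:ℝ) ≤ 1/(ε*Real.log 2) := by positivity
          linarith
        calc (m + 1 : ℝ) ≤ K * (1 + m * (ε * Real.log 2)) := hK1
          _ ≤ K * ((p:ℝ) ^ ε) ^ m := by
              apply mul_le_mul_of_nonneg_left hexp (by linarith)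
      have := h2 a
      push_cast
      linarith
    · -- large prime: p > B so p^ε ≥ 2, a+1 ≤ 2^a ≤ (p^ε)^a
      have hpB' : (2:ℝ) ^ (1/ε) < p := by
        have : ((B:ℕ) : ℝ) < p := by exact_mod_cast Nat.lt_of_not_le (by simpa using hpB)
        calc (2:ℝ) ^ (1/ε) ≤ (B : ℝ) := Nat.le_ceil _
          _ < p := this
      have h2 : (2:ℝ) ≤ (p:ℝ) ^ ε := by
        have := Real.rpow_le_rpow (by positivity) hpB'.le hε.le
        rwa [← Real.rpow_mul (by norm_num : (0:ℝ) ≤ 2), one_div_mul_cancel hε.ne',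
          Real.rpow_one] at this
      have h3 : ((a:ℝ) + 1) ≤ 2 ^ a := by
        have : a < 2 ^ a := Nat.lt_two_pow_self
        have : (a:ℝ) + 1 ≤ ((2:ℕ) ^ a : ℕ) := by exact_mod_cast this
        simpa using this
      rw [one_mul]
      push_cast
      calc ((a:ℝ) + 1) ≤ 2 ^ a := h3
        _ ≤ ((p:ℝ) ^ ε) ^ a := pow_le_pow_left₀ (by norm_num) h2 a
  -- combine
  have hmain : (∏ p ∈ n.primeFactors, ((n.factorization p + 1 : ℕ) : ℝ))
      ≤ (∏ p ∈ n.primeFactors, (if p ≤ B then K else 1))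
        * ∏ p ∈ n.primeFactors, ((p : ℝ) ^ (n.factorization p)) ^ ε := by
    rw [← Finset.prod_mul_distrib]
    apply Finset.prod_le_prod (fun p _ => by positivity) hterm
  have hKprod : (∏ p ∈ n.primeFactors, (if p ≤ B then K else 1)) ≤ K ^ (B + 1) := by
    rw [Finset.prod_ite, Finset.prod_const, Finset.prod_const, one_pow, mul_one]
    apply pow_le_pow_right₀ hKpos
    have hsub : (n.primeFactors.filter (fun p => p ≤ B)) ⊆ Finset.range (B + 1) := by
      intro p hp
      simp only [Finset.mem_filter] at hp
      exact Finset.mem_range.mpr (Nat.lt_succ_of_le hp.2)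
    calc (n.primeFactors.filter (fun p => p ≤ B)).card ≤ (Finset.range (B+1)).card :=
          Finset.card_le_card hsub
      _ = B + 1 := Finset.card_range _
  -- finish
  calc ((n.primeFactors.prod fun p => n.factorization p + 1 : ℕ) : ℝ)
      = ∏ p ∈ n.primeFactors, ((n.factorization p + 1 : ℕ) : ℝ) := by push_cast; rfl
    _ ≤ (∏ p ∈ n.primeFactors, (if p ≤ B then K else 1))
        * ∏ p ∈ n.primeFactors, ((p : ℝ) ^ (n.factorization p)) ^ ε := hmain
    _ ≤ K ^ (B + 1) * ∏ p ∈ n.primeFactors, ((p : ℝ) ^ (n.factorization p)) ^ ε := by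
        apply mul_le_mul_of_nonneg_right hKprod
        apply Finset.prod_nonneg; intro p _; positivity
    _ = K ^ (B + 1) * (n:ℝ) ^ ε := by rw [hnε]

lemma pair_count (A : Finset ℕ) (h : ℤ) (hh : h ≠ 0) :
    ((A ×ˢ A).filter fun pq => ((pq.1 : ℤ) ^ 2 - (pq.2 : ℤ) ^ 2 = h)).card
      ≤ h.natAbs.divisors.card := by
  classical
  apply Finset.card_le_card_of_injOn (fun pq => pq.1 + pq.2)
  · intro pq hpq
    simp only [Finset.mem_coe, Finset.mem_filter, Finset.mem_product] at hpq
    obtain ⟨⟨_, _⟩, heq⟩ := hpq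
    rw [Finset.mem_coe, Nat.mem_divisors]
    constructor
    · have hdvd : ((pq.1 + pq.2 : ℕ) : ℤ) ∣ h := by
        rw [← heq]
        exact ⟨(pq.1 : ℤ) - pq.2, by push_cast; ring⟩
      have h2 := Int.natAbs_dvd_natAbs.mpr hdvd
      rwa [Int.natAbs_natCast] at h2
    · simpa using hh
  · intro pq hpq pq' hpq' hsum
    simp only [Finset.coe_filter, Set.mem_setOf_eq, Finset.mem_product] at hpq hpq'
    obtain ⟨_, heq⟩ := hpq
    obtain ⟨_, heq'⟩ := hpq'
    have hs : ((pq.1 : ℤ) + pq.2) ≠ 0 := by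
      intro h0
      have h1 : pq.1 = 0 ∧ pq.2 = 0 := by constructor <;> omega
      rw [h1.1, h1.2] at heq
      simp at heq
      exact hh heq.symm
    have hsum' : ((pq.1 : ℤ) + pq.2) = ((pq'.1 : ℤ) + pq'.2) := by exact_mod_cast hsum
    have hdiff : ((pq.1 : ℤ) - pq.2) = ((pq'.1 : ℤ) - pq'.2) := by
      have e1 : ((pq.1 : ℤ) + pq.2) * ((pq.1 : ℤ) - pq.2) = h := by rw [← heq]; ring
      have e2 : ((pq'.1 : ℤ) + pq'.2) * ((pq'.1 : ℤ) - pq'.2) = h := by rw [← heq']; ring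
      rw [← hsum'] at e2
      exact mul_left_cancel₀ hs (by rw [e1, e2])
    have : pq.1 = pq'.1 ∧ pq.2 = pq'.2 := by omega
    exact Prod.ext this.1 this.2

lemma count_J4 (A : Finset ℕ) (D : ℝ) (hD0 : 0 ≤ D)
    (hD : ∀ a ∈ A, ∀ b ∈ A, a ≠ b →
      ((((a:ℤ)^2 - (b:ℤ)^2).natAbs.divisors.card : ℝ) ≤ D)) :
    (((((A ×ˢ A) ×ˢ (A ×ˢ A)).filter fun q =>
        ((q.1.1:ℤ)^2 + (q.1.2:ℤ)^2 = (q.2.1:ℤ)^2 + (q.2.2:ℤ)^2)).card : ℝ))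
      ≤ (A.card : ℝ)^2 + (A.card : ℝ)^2 * D := by
  classical
  set T := (((A ×ˢ A) ×ˢ (A ×ˢ A)).filter fun q =>
      ((q.1.1:ℤ)^2 + (q.1.2:ℤ)^2 = (q.2.1:ℤ)^2 + (q.2.2:ℤ)^2)) with hT
  have hsplit : T.card = (T.filter fun q => q.1.1 = q.2.1).card
      + (T.filter fun q => ¬ q.1.1 = q.2.1).card :=
    (Finset.card_filter_add_card_filter_not _).symm
  have h1 : (T.filter fun q => q.1.1 = q.2.1).card ≤ A.card^2 := by
    have : (T.filter fun q => q.1.1 = q.2.1).card ≤ (A ×ˢ A).card := by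
      apply Finset.card_le_card_of_injOn (fun q => q.1)
      · intro q hq
        simp only [Finset.mem_coe, hT, Finset.mem_filter, Finset.mem_product] at hq
        exact Finset.mem_product.mpr hq.1.1.1
      · intro q hq q' hq' hfst
        simp only [hT, Finset.coe_filter, Set.mem_setOf_eq, Finset.mem_filter,
          Finset.mem_product] at hq hq'
        obtain ⟨⟨_, heq⟩, hd⟩ := hq
        obtain ⟨⟨_, heq'⟩, hd'⟩ := hq'
        have hfst' : q.1 = q'.1 := hfst
        have ha : q.1.1 = q'.1.1 := by rw [hfst']
        have hb : q.1.2 = q'.1.2 := by rw [hfst']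
        have h11 : q.2.1 = q'.2.1 := by rw [← hd, ← hd', ha]
        have h22 : q.2.2 = q'.2.2 := by
          have hz : (q.2.2:ℤ)^2 = (q'.2.2:ℤ)^2 := by
            rw [← hd] at heq
            rw [← hd'] at heq'
            rw [ha, hb] at heq
            nlinarith [heq.symm.trans heq']
          have hnat : q.2.2^2 = q'.2.2^2 := by exact_mod_cast hz
          exact Nat.pow_left_injective (by norm_num) hnat
        exact Prod.ext hfst' (Prod.ext h11 h22)
    calc _ ≤ (A ×ˢ A).card := this
      _ = A.card^2 := by rw [Finset.card_product]; ring
  have h2 : ((T.filter fun q => ¬ q.1.1 = q.2.1).card : ℝ) ≤ (A.card : ℝ)^2 * D := by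
    set T2 := T.filter fun q => ¬ q.1.1 = q.2.1 with hT2
    have hmap : ∀ q ∈ T2, (q.1.1, q.2.1) ∈ A ×ˢ A := by
      intro q hq
      simp only [hT2, hT, Finset.mem_filter, Finset.mem_product] at hq
      exact Finset.mem_product.mpr ⟨hq.1.1.1.1, hq.1.1.2.1⟩
    have hcard := Finset.card_eq_sum_card_fiberwise hmap
    have hfib : ∀ ab ∈ A ×ˢ A,
        ((T2.filter fun q => (q.1.1, q.2.1) = ab).card : ℝ) ≤ D := by
      intro ab hab
      rcases eq_or_ne ab.1 ab.2 with he | hne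
      · have : (T2.filter fun q => (q.1.1, q.2.1) = ab) = ∅ := by
          apply Finset.filter_false_of_mem
          intro q hq
          simp only [hT2, Finset.mem_filter] at hq
          intro hc
          apply hq.2
          have hc' : (q.1.1, q.2.1) = ab := hc
          obtain ⟨hx, hy⟩ := Prod.mk.inj hc'
          rw [hx, hy, he]
        rw [this]; simpa using hD0
      · set h : ℤ := (ab.1:ℤ)^2 - (ab.2:ℤ)^2 with hh
        have hhne : h ≠ 0 := by
          intro h0
          apply hne
          have : (ab.1:ℤ)^2 = (ab.2:ℤ)^2 := by linarith [h0, hh ▸ h0]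
          have hnat : ab.1^2 = ab.2^2 := by exact_mod_cast this
          exact Nat.pow_left_injective (by norm_num) hnat
        have hinj : (T2.filter fun q => (q.1.1, q.2.1) = ab).card
            ≤ ((A ×ˢ A).filter fun pq => ((pq.1 : ℤ) ^ 2 - (pq.2 : ℤ) ^ 2 = h)).card := by
          apply Finset.card_le_card_of_injOn (fun q => (q.2.2, q.1.2))
          · intro q hq
            simp only [Finset.mem_coe, hT2, hT, Finset.mem_filter, Finset.mem_product] at hq
            obtain ⟨⟨⟨⟨_, h12⟩, ⟨_, h22⟩⟩, heq⟩, _⟩ := hq.1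
            refine Finset.mem_filter.mpr ⟨Finset.mem_product.mpr ⟨h22, h12⟩, ?_⟩
            have hc' : (q.1.1, q.2.1) = ab := hq.2
            obtain ⟨hx, hy⟩ := Prod.mk.inj hc'
            rw [hh, ← hx, ← hy]
            push_cast
            linarith [heq]
          · intro q hq q' hq' himg
            simp only [Finset.coe_filter, Set.mem_setOf_eq] at hq hq'
            have hc1 : (q.1.1, q.2.1) = ab := hq.2
            have hc2 : (q'.1.1, q'.2.1) = ab := hq'.2
            obtain ⟨e1, e2⟩ := Prod.mk.inj hc1
            obtain ⟨e1', e2'⟩ := Prod.mk.inj hc2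
            have himg' : (q.2.2, q.1.2) = (q'.2.2, q'.1.2) := himg
            obtain ⟨f1, f2⟩ := Prod.mk.inj himg'
            exact Prod.ext (Prod.ext (e1.trans e1'.symm) f2) (Prod.ext (e2.trans e2'.symm) f1)
        calc ((T2.filter fun q => (q.1.1, q.2.1) = ab).card : ℝ)
            ≤ (((A ×ˢ A).filter fun pq => ((pq.1 : ℤ) ^ 2 - (pq.2 : ℤ) ^ 2 = h)).card : ℝ) := by
              exact_mod_cast hinj
          _ ≤ (h.natAbs.divisors.card : ℝ) := by exact_mod_cast pair_count A h hhne
          _ ≤ D := by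
              rw [hh]
              exact hD ab.1 (Finset.mem_product.mp hab).1 ab.2 (Finset.mem_product.mp hab).2 hne
    calc ((T2.card : ℝ)) = ∑ ab ∈ A ×ˢ A, ((T2.filter fun q => (q.1.1, q.2.1) = ab).card : ℝ) := by
          rw [hcard]; push_cast; rfl
      _ ≤ ∑ ab ∈ A ×ˢ A, D := Finset.sum_le_sum hfib
      _ = (A.card : ℝ)^2 * D := by rw [Finset.sum_const, Finset.card_product]; push_cast; ring
  calc (T.card : ℝ) = ((T.filter fun q => q.1.1 = q.2.1).card : ℝ)
        + ((T.filter fun q => ¬ q.1.1 = q.2.1).card : ℝ) := by rw [hsplit]; push_cast; ring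
    _ ≤ (A.card : ℝ)^2 + (A.card : ℝ)^2 * D := by
        apply add_le_add _ h2
        exact_mod_cast h1

lemma count_J2 (A : Finset ℕ) (Z : Finset ℤ) (D : ℝ) (hD0 : 0 ≤ D)
    (hD : ∀ m ∈ Z, ∀ n ∈ Z, m ≠ n → (((m - n).natAbs.divisors.card : ℝ) ≤ D)) :
    (((((A ×ˢ Z) ×ˢ (A ×ˢ Z)).filter fun q =>
        ((q.1.1:ℤ)^2 - q.1.2 = (q.2.1:ℤ)^2 - q.2.2)).card : ℝ))
      ≤ (A.card : ℝ) * Z.card + (Z.card : ℝ)^2 * D := by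
  classical
  set T := (((A ×ˢ Z) ×ˢ (A ×ˢ Z)).filter fun q =>
      ((q.1.1:ℤ)^2 - q.1.2 = (q.2.1:ℤ)^2 - q.2.2)) with hT
  have hsplit : T.card = (T.filter fun q => q.1.2 = q.2.2).card
      + (T.filter fun q => ¬ q.1.2 = q.2.2).card :=
    (Finset.card_filter_add_card_filter_not _).symm
  have h1 : (T.filter fun q => q.1.2 = q.2.2).card ≤ A.card * Z.card := by
    have hle : (T.filter fun q => q.1.2 = q.2.2).card ≤ (A ×ˢ Z).card := by
      apply Finset.card_le_card_of_injOn (fun q => q.1)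
      · intro q hq
        simp only [Finset.mem_coe, hT, Finset.mem_filter, Finset.mem_product] at hq
        exact Finset.mem_product.mpr hq.1.1.1
      · intro q hq q' hq' hfst
        simp only [hT, Finset.coe_filter, Set.mem_setOf_eq, Finset.mem_filter,
          Finset.mem_product] at hq hq'
        obtain ⟨⟨_, heq⟩, hd⟩ := hq
        obtain ⟨⟨_, heq'⟩, hd'⟩ := hq'
        have hfst' : q.1 = q'.1 := hfst
        have ha : q.1.1 = q'.1.1 := by rw [hfst']
        have hb : q.1.2 = q'.1.2 := by rw [hfst']
        have h22 : q.2.2 = q'.2.2 := by rw [← hd, ← hd', hb]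
        have h21 : q.2.1 = q'.2.1 := by
          have hz : (q.2.1:ℤ)^2 = (q'.2.1:ℤ)^2 := by
            rw [← hd] at heq
            rw [← hd'] at heq'
            rw [ha, hb] at heq
            nlinarith [heq.symm.trans heq']
          have hnat : q.2.1^2 = q'.2.1^2 := by exact_mod_cast hz
          exact Nat.pow_left_injective (by norm_num) hnat
        exact Prod.ext hfst' (Prod.ext h21 h22)
    calc _ ≤ (A ×ˢ Z).card := hle
      _ = A.card * Z.card := Finset.card_product _ _
  have h2 : ((T.filter fun q => ¬ q.1.2 = q.2.2).card : ℝ) ≤ (Z.card : ℝ)^2 * D := by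
    set T2 := T.filter fun q => ¬ q.1.2 = q.2.2 with hT2
    have hmap : ∀ q ∈ T2, (q.1.2, q.2.2) ∈ Z ×ˢ Z := by
      intro q hq
      simp only [hT2, hT, Finset.mem_filter, Finset.mem_product] at hq
      exact Finset.mem_product.mpr ⟨hq.1.1.1.2, hq.1.1.2.2⟩
    have hcard := Finset.card_eq_sum_card_fiberwise hmap
    have hfib : ∀ mn ∈ Z ×ˢ Z,
        ((T2.filter fun q => (q.1.2, q.2.2) = mn).card : ℝ) ≤ D := by
      intro mn hmn
      rcases eq_or_ne mn.1 mn.2 with he | hne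
      · have hempty : (T2.filter fun q => (q.1.2, q.2.2) = mn) = ∅ := by
          apply Finset.filter_false_of_mem
          intro q hq
          simp only [hT2, Finset.mem_filter] at hq
          intro hc
          apply hq.2
          have hc' : (q.1.2, q.2.2) = mn := hc
          obtain ⟨hx, hy⟩ := Prod.mk.inj hc'
          rw [hx, hy, he]
        rw [hempty]; simpa using hD0
      · set h : ℤ := mn.1 - mn.2 with hh
        have hhne : h ≠ 0 := sub_ne_zero_of_ne hne
        have hinj : (T2.filter fun q => (q.1.2, q.2.2) = mn).card
            ≤ ((A ×ˢ A).filter fun pq => ((pq.1 : ℤ) ^ 2 - (pq.2 : ℤ) ^ 2 = h)).card := by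
          apply Finset.card_le_card_of_injOn (fun q => (q.1.1, q.2.1))
          · intro q hq
            simp only [Finset.mem_coe, hT2, hT, Finset.mem_filter, Finset.mem_product] at hq
            obtain ⟨⟨⟨⟨h11, _⟩, ⟨h21, _⟩⟩, heq⟩, _⟩ := hq.1
            refine Finset.mem_filter.mpr ⟨Finset.mem_product.mpr ⟨h11, h21⟩, ?_⟩
            have hc' : (q.1.2, q.2.2) = mn := hq.2
            obtain ⟨hx, hy⟩ := Prod.mk.inj hc'
            rw [hh, ← hx, ← hy]
            linarith [heq]
          · intro q hq q' hq' himg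
            simp only [Finset.coe_filter, Set.mem_setOf_eq] at hq hq'
            have hc1 : (q.1.2, q.2.2) = mn := hq.2
            have hc2 : (q'.1.2, q'.2.2) = mn := hq'.2
            obtain ⟨e1, e2⟩ := Prod.mk.inj hc1
            obtain ⟨e1', e2'⟩ := Prod.mk.inj hc2
            have himg' : (q.1.1, q.2.1) = (q'.1.1, q'.2.1) := himg
            obtain ⟨f1, f2⟩ := Prod.mk.inj himg'
            exact Prod.ext (Prod.ext f1 (e1.trans e1'.symm)) (Prod.ext f2 (e2.trans e2'.symm))
        calc ((T2.filter fun q => (q.1.2, q.2.2) = mn).card : ℝ)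
            ≤ (((A ×ˢ A).filter fun pq => ((pq.1 : ℤ) ^ 2 - (pq.2 : ℤ) ^ 2 = h)).card : ℝ) := by
              exact_mod_cast hinj
          _ ≤ (h.natAbs.divisors.card : ℝ) := by exact_mod_cast pair_count A h hhne
          _ ≤ D := by
              rw [hh]
              exact hD mn.1 (Finset.mem_product.mp hmn).1 mn.2 (Finset.mem_product.mp hmn).2 hne
    calc ((T2.card : ℝ)) = ∑ mn ∈ Z ×ˢ Z, ((T2.filter fun q => (q.1.2, q.2.2) = mn).card : ℝ) := by
          rw [hcard]; push_cast; rfl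
      _ ≤ ∑ mn ∈ Z ×ˢ Z, D := Finset.sum_le_sum hfib
      _ = (Z.card : ℝ)^2 * D := by rw [Finset.sum_const, Finset.card_product]; push_cast; ring
  calc (T.card : ℝ) = ((T.filter fun q => q.1.2 = q.2.2).card : ℝ)
        + ((T.filter fun q => ¬ q.1.2 = q.2.2).card : ℝ) := by rw [hsplit]; push_cast; ring
    _ ≤ (A.card : ℝ) * Z.card + (Z.card : ℝ)^2 * D := by
        apply add_le_add _ h2
        exact_mod_cast h1

lemma holder01 (u v : ℝ → ℝ) (hu : Continuous u) (hv : Continuous v)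
    (hu0 : ∀ x, 0 ≤ u x) (hv0 : ∀ x, 0 ≤ v x)
    (Cu Cv : ℝ) (hCu : ∀ x, u x ≤ Cu) (hCv : ∀ x, v x ≤ Cv) :
    (∫ α in (0:ℝ)..1, u α * v α)
      ≤ (∫ α in (0:ℝ)..1, u α ^ 2) ^ ((1:ℝ)/2) * (∫ α in (0:ℝ)..1, v α ^ 2) ^ ((1:ℝ)/2) := by
  have hfin : IsFiniteMeasure (volume.restrict (Set.Ioc (0:ℝ) 1)) := by
    constructor
    rw [Measure.restrict_apply_univ]
    simp
  have hmemu : MemLp u (ENNReal.ofReal 2) (volume.restrict (Set.Ioc (0:ℝ) 1)) := by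
    apply MemLp.of_bound hu.aestronglyMeasurable.restrict Cu
    filter_upwards with x
    rw [Real.norm_of_nonneg (hu0 x)]
    exact hCu x
  have hmemv : MemLp v (ENNReal.ofReal 2) (volume.restrict (Set.Ioc (0:ℝ) 1)) := by
    apply MemLp.of_bound hv.aestronglyMeasurable.restrict Cv
    filter_upwards with x
    rw [Real.norm_of_nonneg (hv0 x)]
    exact hCv x
  have hpq : Real.HolderConjugate 2 2 := by constructor <;> norm_num
  have H := MeasureTheory.integral_mul_le_Lp_mul_Lq_of_nonneg hpq
    (μ := volume.restrict (Set.Ioc (0:ℝ) 1))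
    (Filter.Eventually.of_forall hu0) (Filter.Eventually.of_forall hv0) hmemu hmemv
  rw [intervalIntegral.integral_of_le zero_le_one, intervalIntegral.integral_of_le zero_le_one,
    intervalIntegral.integral_of_le zero_le_one]
  have hrw : ∀ w : ℝ → ℝ, (∫ a in Set.Ioc (0:ℝ) 1, w a ^ (2:ℝ)) = ∫ a in Set.Ioc (0:ℝ) 1, w a ^ 2 := by
    intro w
    apply integral_congr_ae
    filter_upwards with x
    rw [show (2:ℝ) = ((2:ℕ):ℝ) by norm_num, Real.rpow_natCast]
  rw [hrw u, hrw v] at H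
  exact H

/-- The exponential sum over squares of primes `p ∈ [P/2, P)`:
`f₀(α) = Σ_{P/2 ≤ p < P} e(p² α)`. -/
noncomputable def f₀ (P α : ℝ) : ℂ :=
  ∑ p ∈ (range ⌈P⌉₊).filter (fun p : ℕ => p.Prime ∧ P / 2 ≤ (p : ℝ) ∧ (p : ℝ) < P),
    e ((p : ℝ) ^ 2 * α)

/-- **Hua-type mean-value bound (cf. Wooley (3.21)–(3.23)).** For every `ε > 0` there is
`C > 0` such that for real `N ≥ 2`, `P = (2/3)N^(1/2)`, and any finite set `Z` of integers
contained in `(N/2, N]`, with `K(α) = Σ_{n ∈ Z} e(-nα)`, one has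
`∫₀¹ |f₀(α)|³ |K(α)| dα ≤ C (N^(3/4+ε) |Z|^(1/2) + N^(1/2+ε) |Z|)`. -/
theorem mean_value_bound_f0_cubed :
    ∀ ε : ℝ, 0 < ε →
    ∃ C : ℝ, 0 < C ∧
      ∀ N P : ℝ, 2 ≤ N → P = 2 / 3 * N ^ ((1 : ℝ) / 2) →
      ∀ Z : Finset ℤ, (∀ n ∈ Z, N / 2 < (n : ℝ) ∧ (n : ℝ) ≤ N) →
      (∫ α in (0 : ℝ)..1, ‖f₀ P α‖ ^ 3 * ‖∑ n ∈ Z, e (-(n * α))‖)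
        ≤ C * (N ^ (3 / 4 + ε) * (Z.card : ℝ) ^ ((1 : ℝ) / 2) + N ^ (1 / 2 + ε) * Z.card) := by
  intro ε hε
  obtain ⟨C₀, hC₀1, hC₀⟩ := divisor_bound hε
  have hC₀0 : 0 < C₀ := lt_of_lt_of_le one_pos hC₀1
  refine ⟨8 * C₀ ^ 2, by positivity, ?_⟩
  intro N P hN hP Z hZ
  classical
  set A : Finset ℕ := (range ⌈P⌉₊).filter
    (fun p : ℕ => p.Prime ∧ P / 2 ≤ (p : ℝ) ∧ (p : ℝ) < P) with hA
  set K : ℝ → ℂ := fun α => ∑ n ∈ Z, e (-(n * α)) with hKdef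
  -- basic positivity facts
  have hN0 : (0:ℝ) < N := by linarith
  have hN1 : (1:ℝ) ≤ N := by linarith
  have hNh1 : (1:ℝ) ≤ N ^ ((1:ℝ)/2) := Real.one_le_rpow hN1 (by norm_num)
  have hNε1 : (1:ℝ) ≤ N ^ ε := Real.one_le_rpow hN1 hε.le
  have hP0 : 0 ≤ P := by rw [hP]; positivity
  have hPle : P ≤ N ^ ((1:ℝ)/2) := by
    rw [hP]; linarith only [Real.rpow_nonneg hN0.le ((1:ℝ)/2)]
  -- card A bound
  have hM : (A.card : ℝ) ≤ 2 * N ^ ((1:ℝ)/2) := by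
    have h1 : A.card ≤ ⌈P⌉₊ := by
      calc A.card ≤ (range ⌈P⌉₊).card := Finset.card_le_card (Finset.filter_subset _ _)
        _ = ⌈P⌉₊ := Finset.card_range _
    have h2 : (⌈P⌉₊ : ℝ) < P + 1 := Nat.ceil_lt_add_one hP0
    have h3 : (A.card : ℝ) ≤ (⌈P⌉₊ : ℝ) := by exact_mod_cast h1
    linarith only [h2, h3, hPle, hNh1]
  -- elements of A are < N^(1/2), squares ≤ N
  have hAsq : ∀ a ∈ A, ((a:ℝ))^2 ≤ N := by
    intro a ha
    rw [hA, Finset.mem_filter] at ha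
    have haP : (a:ℝ) < P := ha.2.2.2
    have h1 : (a:ℝ) ≤ N ^ ((1:ℝ)/2) := le_trans haP.le hPle
    have h2 : (N ^ ((1:ℝ)/2))^2 = N := by
      rw [← Real.rpow_natCast (N ^ ((1:ℝ)/2)) 2, ← Real.rpow_mul hN0.le]
      norm_num
    have h0 : (0:ℝ) ≤ (a:ℝ) := Nat.cast_nonneg a
    calc ((a:ℝ))^2 ≤ (N ^ ((1:ℝ)/2))^2 := by nlinarith only [h0, h1]
      _ = N := h2
  set D : ℝ := C₀ * N ^ ε with hD
  have hD0 : 0 ≤ D := by positivity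
  have hD1 : 1 ≤ D := by
    calc (1:ℝ) = 1 * 1 := by ring
      _ ≤ C₀ * N ^ ε := by apply mul_le_mul hC₀1 hNε1 one_pos.le hC₀0.le
  -- divisor bound applied to h with |h| ≤ N
  have hDiv : ∀ h : ℤ, h ≠ 0 → |(h:ℝ)| ≤ N → ((h.natAbs.divisors.card : ℝ) ≤ D) := by
    intro h hne habs
    have hnabs : h.natAbs ≠ 0 := Int.natAbs_ne_zero.mpr hne
    have h1 := hC₀ h.natAbs hnabs
    have h2 : ((h.natAbs : ℕ) : ℝ) ≤ N := by
      have e1 : ((h.natAbs : ℕ) : ℝ) = |(h:ℝ)| := by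
        simp [Nat.cast_natAbs]
      rw [e1]; exact habs
    have h3 : ((h.natAbs : ℕ) : ℝ) ^ ε ≤ N ^ ε :=
      Real.rpow_le_rpow (by positivity) h2 hε.le
    calc (h.natAbs.divisors.card : ℝ) ≤ C₀ * ((h.natAbs : ℕ) : ℝ) ^ ε := h1
      _ ≤ C₀ * N ^ ε := mul_le_mul_of_nonneg_left h3 hC₀0.le
      _ = D := hD.symm
  -- divisor hypotheses for the two counts
  have hhalfsq : (N ^ ((1:ℝ)/2))^2 = N := by
    rw [← Real.rpow_natCast (N ^ ((1:ℝ)/2)) 2, ← Real.rpow_mul hN0.le]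
    norm_num
  have hDJ4 : ∀ a ∈ A, ∀ b ∈ A, a ≠ b →
      ((((a:ℤ)^2 - (b:ℤ)^2).natAbs.divisors.card : ℝ) ≤ D) := by
    intro a ha b hb hab
    apply hDiv
    · intro h0
      apply hab
      have hz : (a:ℤ)^2 = (b:ℤ)^2 := by
        have h00 := sub_eq_zero.mp h0
        linarith only [h00]
      have hnat : a^2 = b^2 := by exact_mod_cast hz
      exact Nat.pow_left_injective (by norm_num) hnat
    · have h1 := hAsq a ha
      have h2 := hAsq b hb
      push_cast
      rw [abs_le]
      constructor <;> linarith only [h1, h2, sq_nonneg ((a:ℝ)), sq_nonneg ((b:ℝ))]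
  have hDJ2 : ∀ m ∈ Z, ∀ n ∈ Z, m ≠ n → (((m - n).natAbs.divisors.card : ℝ) ≤ D) := by
    intro m hm n hn hmn
    apply hDiv _ (sub_ne_zero_of_ne hmn)
    obtain ⟨hm1, hm2⟩ := hZ m hm
    obtain ⟨hn1, hn2⟩ := hZ n hn
    push_cast
    rw [abs_le]
    constructor <;> linarith only [hm1, hm2, hn1, hn2, hN0]
  -- expansions of products as single sums
  have hf0A : ∀ α : ℝ, f₀ P α = ∑ p ∈ A, e ((p:ℝ)^2 * α) := by
    intro α
    rw [f₀.eq_def, ← hA]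
  have hf2 : ∀ α : ℝ, (f₀ P α)^2
      = ∑ pq ∈ A ×ˢ A, e (((((pq.1:ℤ)^2 + (pq.2:ℤ)^2 : ℤ)):ℝ) * α) := by
    intro α
    rw [hf0A α, sq, Finset.sum_mul_sum, ← Finset.sum_product']
    refine Finset.sum_congr rfl fun pq _ => ?_
    rw [← e_add]
    congr 1
    push_cast
    ring
  have hfK : ∀ α : ℝ, f₀ P α * K α
      = ∑ pn ∈ A ×ˢ Z, e (((((pn.1:ℤ)^2 - pn.2 : ℤ)):ℝ) * α) := by
    intro α
    rw [hf0A α, hKdef, Finset.sum_mul_sum, ← Finset.sum_product']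
    refine Finset.sum_congr rfl fun pn _ => ?_
    rw [← e_add]
    congr 1
    push_cast
    ring
  -- integral identities
  have hu2 : (∫ α in (0:ℝ)..1, (‖f₀ P α‖^2)^2)
      = ((((A ×ˢ A) ×ˢ (A ×ˢ A)).filter fun q =>
          ((q.1.1:ℤ)^2 + (q.1.2:ℤ)^2 = (q.2.1:ℤ)^2 + (q.2.2:ℤ)^2)).card : ℝ) := by
    have heq : ∀ α : ℝ, (‖f₀ P α‖^2)^2
        = ‖∑ pq ∈ A ×ˢ A, e ((((fun pq : ℕ × ℕ => (pq.1:ℤ)^2 + (pq.2:ℤ)^2) pq : ℤ):ℝ) * α)‖^2 := by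
      intro α
      simp only
      rw [← hf2 α, norm_pow]
    rw [intervalIntegral.integral_congr (fun α _ => heq α)]
    exact key_count (A ×ˢ A) (fun pq => (pq.1:ℤ)^2 + (pq.2:ℤ)^2)
  have hv2 : (∫ α in (0:ℝ)..1, (‖f₀ P α‖ * ‖K α‖)^2)
      = ((((A ×ˢ Z) ×ˢ (A ×ˢ Z)).filter fun q =>
          ((q.1.1:ℤ)^2 - q.1.2 = (q.2.1:ℤ)^2 - q.2.2)).card : ℝ) := by
    have heq : ∀ α : ℝ, (‖f₀ P α‖ * ‖K α‖)^2
        = ‖∑ pn ∈ A ×ˢ Z, e ((((fun pn : ℕ × ℤ => (pn.1:ℤ)^2 - pn.2) pn : ℤ):ℝ) * α)‖^2 := by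
      intro α
      simp only
      rw [← hfK α, norm_mul]
    rw [intervalIntegral.integral_congr (fun α _ => heq α)]
    exact key_count (A ×ˢ Z) (fun pn => (pn.1:ℤ)^2 - pn.2)
  -- continuity and boundedness
  have hfcont : Continuous fun α : ℝ => f₀ P α := by
    have : (fun α : ℝ => f₀ P α) = fun α => ∑ p ∈ A, e ((p:ℝ)^2 * α) := funext hf0A
    rw [this]
    exact continuous_finset_sum _ fun p _ => continuous_e_mul _
  have hKcont : Continuous K := by
    rw [hKdef]
    apply continuous_finset_sum _ fun n _ => ?_
    have : (fun α : ℝ => e (-((n:ℝ) * α))) = fun α => e ((-(n:ℝ)) * α) := by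
      funext α; rw [neg_mul]
    rw [this]
    exact continuous_e_mul _
  have hfbd : ∀ α : ℝ, ‖f₀ P α‖ ≤ (A.card : ℝ) := by
    intro α
    rw [hf0A α]
    calc ‖∑ p ∈ A, e ((p:ℝ)^2 * α)‖ ≤ ∑ p ∈ A, ‖e ((p:ℝ)^2 * α)‖ := norm_sum_le _ _
      _ = ∑ p ∈ A, 1 := Finset.sum_congr rfl fun p _ => norm_e _
      _ = (A.card : ℝ) := by rw [Finset.sum_const]; simp
  have hKbd : ∀ α : ℝ, ‖K α‖ ≤ (Z.card : ℝ) := by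
    intro α
    rw [hKdef]
    calc ‖∑ n ∈ Z, e (-((n:ℝ) * α))‖ ≤ ∑ n ∈ Z, ‖e (-((n:ℝ) * α))‖ := norm_sum_le _ _
      _ = ∑ n ∈ Z, 1 := Finset.sum_congr rfl fun n _ => norm_e _
      _ = (Z.card : ℝ) := by rw [Finset.sum_const]; simp
  -- Hölder
  have hHold := holder01 (fun α => ‖f₀ P α‖^2) (fun α => ‖f₀ P α‖ * ‖K α‖)
    (by fun_prop) (by fun_prop)
    (fun x => by positivity) (fun x => by positivity)
    ((A.card : ℝ)^2) ((A.card : ℝ) * (Z.card : ℝ))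
    (fun x => by
      nlinarith only [hfbd x, norm_nonneg (f₀ P x)])
    (fun x => by
      have h1 := hfbd x
      have h2 := hKbd x
      exact mul_le_mul h1 h2 (norm_nonneg _) (Nat.cast_nonneg _))
  have hLHS : (∫ α in (0:ℝ)..1, ‖f₀ P α‖ ^ 3 * ‖∑ n ∈ Z, e (-((n:ℝ) * α))‖)
      = ∫ α in (0:ℝ)..1, (fun α => ‖f₀ P α‖^2) α * (fun α => ‖f₀ P α‖ * ‖K α‖) α := by
    apply intervalIntegral.integral_congr
    intro α _
    simp only [hKdef]
    ring
  -- counting bounds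
  have hJ4 : (∫ α in (0:ℝ)..1, (‖f₀ P α‖^2)^2) ≤ 8 * C₀ * N ^ ((1:ℝ) + ε) := by
    rw [hu2]
    have h1 := count_J4 A D hD0 hDJ4
    have hM2 : (A.card : ℝ)^2 ≤ 4 * N := by nlinarith only [hM, hhalfsq, (Nat.cast_nonneg A.card : (0:ℝ) ≤ A.card)]
    have hNe : N * N ^ ε = N ^ ((1:ℝ) + ε) := by
      rw [Real.rpow_add hN0, Real.rpow_one]
    calc _ ≤ (A.card : ℝ)^2 + (A.card : ℝ)^2 * D := h1
      _ ≤ (A.card : ℝ)^2 * D + (A.card : ℝ)^2 * D := by nlinarith only [sq_nonneg ((A.card:ℝ)), hD1]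
      _ ≤ (4*N) * D + (4*N) * D := by nlinarith only [hM2, hD0]
      _ = 8 * C₀ * (N * N ^ ε) := by rw [hD]; ring
      _ = 8 * C₀ * N ^ ((1:ℝ) + ε) := by rw [hNe]
  have hJ2 : (∫ α in (0:ℝ)..1, (‖f₀ P α‖ * ‖K α‖)^2)
      ≤ 2 * N ^ ((1:ℝ)/2) * (Z.card : ℝ) + (Z.card : ℝ)^2 * D := by
    rw [hv2]
    have h1 := count_J2 A Z D hD0 hDJ2
    have h2 : (A.card : ℝ) * (Z.card : ℝ) ≤ 2 * N ^ ((1:ℝ)/2) * (Z.card : ℝ) := by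
      apply mul_le_mul_of_nonneg_right hM (Nat.cast_nonneg _)
    linarith only [h1, h2]
  -- final numeric assembly
  set z : ℝ := (Z.card : ℝ) with hzdef
  have hz0 : (0:ℝ) ≤ z := Nat.cast_nonneg _
  have hNh0 : (0:ℝ) ≤ N ^ ((1:ℝ)/2) := Real.rpow_nonneg hN0.le _
  have hNε0 : (0:ℝ) ≤ N ^ ε := Real.rpow_nonneg hN0.le _
  have hQ1 : (0:ℝ) ≤ N ^ ((3:ℝ)/4 + ε) := Real.rpow_nonneg hN0.le _
  have hQ2 : (0:ℝ) ≤ N ^ ((1:ℝ)/2 + ε) := Real.rpow_nonneg hN0.le _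
  have hNeps0 : (0:ℝ) ≤ 8*C₀*N^((1:ℝ)+ε) := by positivity
  have hIu0 : (0:ℝ) ≤ ∫ α in (0:ℝ)..1, (‖f₀ P α‖^2)^2 :=
    intervalIntegral.integral_nonneg (by norm_num) (fun x _ => by positivity)
  have hIv0 : (0:ℝ) ≤ ∫ α in (0:ℝ)..1, (‖f₀ P α‖ * ‖K α‖)^2 :=
    intervalIntegral.integral_nonneg (by norm_num) (fun x _ => by positivity)
  have h1 : (∫ α in (0:ℝ)..1, (‖f₀ P α‖^2)^2) ^ ((1:ℝ)/2)
      ≤ Real.sqrt (8*C₀*N^((1:ℝ)+ε)) := by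
    rw [← Real.sqrt_eq_rpow]
    exact Real.sqrt_le_sqrt hJ4
  have ht1 : (0:ℝ) ≤ 2 * N ^ ((1:ℝ)/2) * z := by
    apply mul_nonneg (by linarith only [hNh0]) hz0
  have ht2 : (0:ℝ) ≤ z^2 * D := by positivity
  have h2 : (∫ α in (0:ℝ)..1, (‖f₀ P α‖ * ‖K α‖)^2) ^ ((1:ℝ)/2)
      ≤ Real.sqrt (2 * N ^ ((1:ℝ)/2) * z) + Real.sqrt (z^2 * D) := by
    rw [← Real.sqrt_eq_rpow]
    calc Real.sqrt (∫ α in (0:ℝ)..1, (‖f₀ P α‖ * ‖K α‖)^2)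
        ≤ Real.sqrt (2 * N ^ ((1:ℝ)/2) * z + z^2 * D) := Real.sqrt_le_sqrt hJ2
      _ ≤ Real.sqrt (2 * N ^ ((1:ℝ)/2) * z) + Real.sqrt (z^2 * D) := sqrt_add_le' ht1 ht2
  -- exponent identities
  have e32 : N^((1:ℝ)+ε) * N^((1:ℝ)/2) = N^((3:ℝ)/2+ε) := by
    rw [← Real.rpow_add hN0]; congr 1; ring
  have eN2 : N^((1:ℝ)+ε) * N^ε = N^((1:ℝ)+2*ε) := by
    rw [← Real.rpow_add hN0]; congr 1; ring
  have eQ1 : (N^((3:ℝ)/4+ε))^2 = N^((3:ℝ)/2+2*ε) := by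
    rw [← Real.rpow_natCast (N^((3:ℝ)/4+ε)) 2, ← Real.rpow_mul hN0.le]; congr 1; push_cast; ring
  have eQ2 : (N^((1:ℝ)/2+ε))^2 = N^((1:ℝ)+2*ε) := by
    rw [← Real.rpow_natCast (N^((1:ℝ)/2+ε)) 2, ← Real.rpow_mul hN0.le]; congr 1; push_cast; ring
  have emono : N^((3:ℝ)/2+ε) ≤ N^((3:ℝ)/2+2*ε) :=
    Real.rpow_le_rpow_of_exponent_le hN1 (by linarith only [hε.le])
  -- term 1
  have hterm1 : Real.sqrt (8*C₀*N^((1:ℝ)+ε)) * Real.sqrt (2 * N ^ ((1:ℝ)/2) * z)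
      ≤ 4*C₀*N^((3:ℝ)/4+ε) * Real.sqrt z := by
    rw [← Real.sqrt_mul hNeps0]
    have hin : 8*C₀*N^((1:ℝ)+ε) * (2 * N ^ ((1:ℝ)/2) * z)
        ≤ (4*C₀*N^((3:ℝ)/4+ε))^2 * z := by
      have lhs_eq : 8*C₀*N^((1:ℝ)+ε) * (2 * N ^ ((1:ℝ)/2) * z)
          = 16*C₀*(N^((3:ℝ)/2+ε))*z := by rw [← e32]; ring
      have rhs_eq : (4*C₀*N^((3:ℝ)/4+ε))^2 * z = 16*C₀^2*(N^((3:ℝ)/2+2*ε))*z := by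
        rw [← eQ1]; ring
      rw [lhs_eq, rhs_eq]
      have hcc : C₀ ≤ C₀^2 := by nlinarith only [hC₀1]
      have hf1 : C₀*(N^((3:ℝ)/2+ε)) ≤ C₀^2*(N^((3:ℝ)/2+2*ε)) :=
        calc C₀*(N^((3:ℝ)/2+ε)) ≤ C₀*(N^((3:ℝ)/2+2*ε)) :=
              mul_le_mul_of_nonneg_left emono hC₀0.le
          _ ≤ C₀^2*(N^((3:ℝ)/2+2*ε)) :=
              mul_le_mul_of_nonneg_right hcc (Real.rpow_nonneg hN0.le _)
      nlinarith only [hf1, hz0]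
    calc Real.sqrt (8*C₀*N^((1:ℝ)+ε) * (2 * N ^ ((1:ℝ)/2) * z))
        ≤ Real.sqrt ((4*C₀*N^((3:ℝ)/4+ε))^2 * z) := Real.sqrt_le_sqrt hin
      _ = 4*C₀*N^((3:ℝ)/4+ε) * Real.sqrt z := by
          rw [Real.sqrt_mul (by positivity), Real.sqrt_sq (by positivity)]
  -- term 2
  have hterm2 : Real.sqrt (8*C₀*N^((1:ℝ)+ε)) * Real.sqrt (z^2 * D)
      ≤ 3*C₀*N^((1:ℝ)/2+ε) * z := by
    rw [← Real.sqrt_mul hNeps0]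
    have hin : 8*C₀*N^((1:ℝ)+ε) * (z^2 * D) ≤ (3*C₀*N^((1:ℝ)/2+ε)*z)^2 := by
      have lhs_eq : 8*C₀*N^((1:ℝ)+ε) * (z^2 * D) = 8*C₀^2*(N^((1:ℝ)+2*ε))*z^2 := by
        rw [hD, ← eN2]; ring
      have rhs_eq : (3*C₀*N^((1:ℝ)/2+ε)*z)^2 = 9*C₀^2*(N^((1:ℝ)+2*ε))*z^2 := by
        rw [← eQ2]; ring
      rw [lhs_eq, rhs_eq]
      have hpos9 : (0:ℝ) ≤ C₀^2*(N^((1:ℝ)+2*ε))*z^2 := by positivity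
      linarith only [hpos9]
    calc Real.sqrt (8*C₀*N^((1:ℝ)+ε) * (z^2 * D))
        ≤ Real.sqrt ((3*C₀*N^((1:ℝ)/2+ε)*z)^2) := Real.sqrt_le_sqrt hin
      _ = 3*C₀*N^((1:ℝ)/2+ε)*z := Real.sqrt_sq (by positivity)
  -- put everything together
  have hsqz : Real.sqrt z = z ^ ((1:ℝ)/2) := Real.sqrt_eq_rpow z
  calc (∫ α in (0:ℝ)..1, ‖f₀ P α‖ ^ 3 * ‖∑ n ∈ Z, e (-((n:ℝ) * α))‖)
      = ∫ α in (0:ℝ)..1, ‖f₀ P α‖^2 * (‖f₀ P α‖ * ‖K α‖) := by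
        rw [hLHS]
    _ ≤ (∫ α in (0:ℝ)..1, (‖f₀ P α‖^2)^2) ^ ((1:ℝ)/2)
        * (∫ α in (0:ℝ)..1, (‖f₀ P α‖ * ‖K α‖)^2) ^ ((1:ℝ)/2) := hHold
    _ ≤ Real.sqrt (8*C₀*N^((1:ℝ)+ε))
        * (Real.sqrt (2 * N ^ ((1:ℝ)/2) * z) + Real.sqrt (z^2 * D)) := by
        apply mul_le_mul h1 h2 (Real.rpow_nonneg hIv0 _) (Real.sqrt_nonneg _)
    _ = Real.sqrt (8*C₀*N^((1:ℝ)+ε)) * Real.sqrt (2 * N ^ ((1:ℝ)/2) * z)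
        + Real.sqrt (8*C₀*N^((1:ℝ)+ε)) * Real.sqrt (z^2 * D) := by ring
    _ ≤ 4*C₀*N^((3:ℝ)/4+ε) * Real.sqrt z + 3*C₀*N^((1:ℝ)/2+ε) * z :=
        add_le_add hterm1 hterm2
    _ ≤ 8 * C₀ ^ 2 * (N ^ ((3:ℝ)/4 + ε) * z ^ ((1:ℝ)/2) + N ^ ((1:ℝ)/2 + ε) * z) := by
        rw [hsqz]
        have hzr0 : (0:ℝ) ≤ z ^ ((1:ℝ)/2) := Real.rpow_nonneg hz0 _
        have hcc : C₀ ≤ C₀^2 := by nlinarith only [hC₀1]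
        nlinarith only [hcc, mul_nonneg hQ1 hzr0, mul_nonneg hQ2 hz0, sq_nonneg C₀, hC₀0.le]
    _ = 8 * C₀ ^ 2 * (N ^ (3/4 + ε) * (Z.card : ℝ) ^ ((1:ℝ)/2) + N ^ (1/2 + ε) * (Z.card : ℝ)) := by
        norm_num [hzdef]
end
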